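/- arXiv:1311.4770 — 7 statements merged into one kernel-verified Lean document; each statement's English description precedes it below -/
import Mathlib

section
/- Let (V, ⟨·,·⟩) be a finite-dimensional real inner product space and β a linear form on V whose operator norm ‖β‖ := sup{β(v) : ⟨v,v⟩ = 1} satisfies ‖β‖ < 1, and define F(v) = √⟨v,v⟩ + β(v). Then (1 − ‖β‖)·√⟨v,v⟩ ≤ F(v) ≤ (1 + ‖β‖)·√⟨v,v⟩ for every v ∈ V; in particular F(v) > 0 for every v ≠ 0, and the fundamental tensor of L = F² is positive definite at every v ≠ 0, so that F is a Randers (Finsler) metric on V. -/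
open scoped RealInnerProductSpace

/-- The fundamental tensor of a (pseudo-)Finsler-type Lagrangian `L` at a vector `v`:
`g_v(u,w) = (1/2) · ∂²/∂t∂s L(v + t u + s w)|_{t=s=0}`. -/
noncomputable def fundTensor {V : Type*} [NormedAddCommGroup V] [NormedSpace ℝ V]
    (L : V → ℝ) (v u w : V) : ℝ :=
  (1 / 2) * fderiv ℝ (fderiv ℝ L) v u w

section Helpers
variable {V : Type*} [NormedAddCommGroup V] [InnerProductSpace ℝ V]

lemma hasFDerivAt_norm' (v : V) (hv : v ≠ 0) :
    HasFDerivAt (fun w : V => ‖w‖) ((‖v‖⁻¹ : ℝ) • innerSL ℝ v) v := by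
  have h1 : HasFDerivAt (fun w : V => ‖w‖ ^ 2) (2 • (innerSL ℝ v)) v :=
    (hasStrictFDerivAt_norm_sq v).hasFDerivAt
  have hne : ‖v‖ ^ 2 ≠ 0 := pow_ne_zero 2 (norm_ne_zero_iff.mpr hv)
  have h2 := (Real.hasDerivAt_sqrt hne).comp_hasFDerivAt v h1
  have heq : (fun w : V => Real.sqrt (‖w‖ ^ 2)) = fun w : V => ‖w‖ := by
    funext w; rw [Real.sqrt_sq (norm_nonneg w)]
  have h3 : HasFDerivAt (fun w : V => ‖w‖) ((1 / (2 * Real.sqrt (‖v‖ ^ 2))) • 2 • (innerSL ℝ) v) v := heq ▸ h2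
  convert h3 using 1
  ext u
  have : Real.sqrt (‖v‖ ^ 2) = ‖v‖ := Real.sqrt_sq (norm_nonneg v)
  simp [this, smul_smul]
  ring

/-- inner product as a CLM into CLMs (real case, plain linearity). -/
noncomputable def innerCLM (V : Type*) [NormedAddCommGroup V] [InnerProductSpace ℝ V]
    [FiniteDimensional ℝ V] : V →L[ℝ] (V →L[ℝ] ℝ) :=
  LinearMap.toContinuousLinearMap
    { toFun := fun w => innerSL ℝ w
      map_add' := by intro x y; ext u; simp [inner_add_left]
      map_smul' := by intro c x; ext u; simp [real_inner_smul_left] }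

variable [FiniteDimensional ℝ V]

@[simp] lemma innerCLM_apply (w u : V) : innerCLM V w u = ⟪w, u⟫ := rfl

noncomputable def bCLM (β : V →ₗ[ℝ] ℝ) : V →L[ℝ] ℝ := LinearMap.toContinuousLinearMap β

@[simp] lemma bCLM_apply (β : V →ₗ[ℝ] ℝ) (u : V) : bCLM β u = β u := rfl

noncomputable def Phi (β : V →ₗ[ℝ] ℝ) : V → (V →L[ℝ] ℝ) := fun w =>
  (2 * (‖w‖ + β w) * ‖w‖⁻¹) • innerCLM V w + (2 * (‖w‖ + β w)) • bCLM β

lemma hasFDerivAt_L (β : V →ₗ[ℝ] ℝ) (L : V → ℝ)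
    (hL : ∀ w : V, L w = (‖w‖ + β w) ^ 2) (v : V) (hv : v ≠ 0) :
    HasFDerivAt L (Phi β v) v := by
  have hf : HasFDerivAt (fun w : V => ‖w‖ + β w)
      ((‖v‖⁻¹ : ℝ) • innerSL ℝ v + bCLM β) v :=
    (hasFDerivAt_norm' v hv).add (bCLM β).hasFDerivAt
  have h2 := hf.mul hf
  have hLe : L = fun w : V => (‖w‖ + β w) * (‖w‖ + β w) := by
    funext w; rw [hL w, sq]
  rw [hLe]
  refine HasFDerivAt.congr_fderiv h2 ?_
  ext u
  simp [Phi, innerSL_apply_apply]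
  ring

lemma fderiv_fderiv_L (β : V →ₗ[ℝ] ℝ) (L : V → ℝ)
    (hL : ∀ w : V, L w = (‖w‖ + β w) ^ 2) (v : V) (hv : v ≠ 0) (u : V) :
    fderiv ℝ (fderiv ℝ L) v u u =
      2 * ((‖v‖ + β v) / ‖v‖ * (⟪u, u⟫ - ⟪v, u⟫ ^ 2 / ‖v‖ ^ 2)
        + (⟪v, u⟫ / ‖v‖ + β u) ^ 2) := by
  have hnv : ‖v‖ ≠ 0 := norm_ne_zero_iff.mpr hv
  have hev : fderiv ℝ L =ᶠ[nhds v] Phi β := by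
    filter_upwards [IsOpen.mem_nhds isOpen_compl_singleton hv] with w hw
    exact (hasFDerivAt_L β L hL w hw).fderiv
  rw [hev.fderiv_eq]
  -- derivatives of scalar coefficients
  have hn := hasFDerivAt_norm' v hv
  have hβ := (bCLM β).hasFDerivAt (x := v)
  have hsum : HasFDerivAt (fun w : V => ‖w‖ + β w)
      ((‖v‖⁻¹ : ℝ) • innerSL ℝ v + bCLM β) v := hn.add hβ
  have hγ := hsum.const_mul (2 : ℝ)
  have hinv := (hasDerivAt_inv hnv).comp_hasFDerivAt v hn
  have hα := hγ.mul hinv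
  have h1 := hα.smul (innerCLM V).hasFDerivAt (x := v)
  have h2 := hγ.smul (hasFDerivAt_const (bCLM β) v)
  have htot := h1.add h2
  have : HasFDerivAt (Phi β) _ v := htot
  rw [this.fderiv]
  simp only [ContinuousLinearMap.add_apply, ContinuousLinearMap.smul_apply,
    ContinuousLinearMap.smulRight_apply, ContinuousLinearMap.coe_smul', Pi.smul_apply, Pi.mul_apply, Function.comp_apply,
    innerCLM_apply, bCLM_apply, innerSL_apply_apply, smul_eq_mul, ContinuousLinearMap.zero_apply,
    ContinuousLinearMap.coe_coe]
  rw [real_inner_comm u v]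
  field_simp
  ring

end Helpers

/-- If `‖β‖ := sup {β v : ⟨v,v⟩ = 1} < 1`, then the Randers-type function
`F(v) = √⟨v,v⟩ + β(v)` satisfies `(1 − ‖β‖)·√⟨v,v⟩ ≤ F(v) ≤ (1 + ‖β‖)·√⟨v,v⟩`
for every `v`; in particular `F(v) > 0` for `v ≠ 0`, and the fundamental tensor of
`L = F²` is positive definite at every `v ≠ 0`, so `F` is a Randers (Finsler) metric. -/
theorem randers_metric_of_small_beta
    {V : Type*} [NormedAddCommGroup V] [InnerProductSpace ℝ V] [FiniteDimensional ℝ V]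
    (β : V →ₗ[ℝ] ℝ)
    (F L : V → ℝ)
    (hF : ∀ v : V, F v = Real.sqrt ⟪v, v⟫ + β v)
    (hL : ∀ v : V, L v = (F v) ^ 2)
    (b : ℝ) (hb : b = sSup ((fun v : V => β v) '' {v : V | ⟪v, v⟫ = (1 : ℝ)}))
    (hb1 : b < 1) :
    (∀ v : V, (1 - b) * Real.sqrt ⟪v, v⟫ ≤ F v ∧ F v ≤ (1 + b) * Real.sqrt ⟪v, v⟫) ∧
    (∀ v : V, v ≠ 0 → 0 < F v) ∧
    (∀ v : V, v ≠ 0 → ∀ u : V, u ≠ 0 → 0 < fundTensor L v u u) := by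
  have hs : ∀ w : V, Real.sqrt ⟪w, w⟫ = ‖w‖ := by
    intro w
    rw [real_inner_self_eq_norm_mul_norm, Real.sqrt_mul_self (norm_nonneg w)]
  have hF' : ∀ w : V, F w = ‖w‖ + β w := by intro w; rw [hF w, hs w]
  have hL' : ∀ w : V, L w = (‖w‖ + β w) ^ 2 := by intro w; rw [hL w, hF' w]
  -- the unit sphere description
  have hset : {v : V | ⟪v, v⟫ = (1 : ℝ)} = Metric.sphere (0 : V) 1 := by
    ext w
    simp only [Set.mem_setOf_eq, mem_sphere_iff_norm, sub_zero,
      real_inner_self_eq_norm_mul_norm]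
    constructor
    · intro h
      rcases mul_self_eq_one_iff.mp h with h1 | h1
      · exact h1
      · exfalso; have := norm_nonneg w; linarith
    · intro h; rw [h]; ring
  -- bounds on β
  have hBdd : BddAbove ((fun v : V => β v) '' {v : V | ⟪v, v⟫ = (1 : ℝ)}) := by
    rw [hset]
    exact ((isCompact_sphere (0 : V) 1).image β.continuous_of_finiteDimensional).bddAbove
  have hβle : ∀ w : V, w ≠ 0 → β w ≤ b * ‖w‖ := by
    intro w hw
    have hnw : (0 : ℝ) < ‖w‖ := norm_pos_iff.mpr hw
    set z : V := ‖w‖⁻¹ • w with hz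
    have hzn : ‖z‖ = 1 := by
      rw [hz, norm_smul, norm_inv, norm_norm, inv_mul_cancel₀ hnw.ne']
    have hzmem : z ∈ {v : V | ⟪v, v⟫ = (1 : ℝ)} := by
      simp only [Set.mem_setOf_eq, real_inner_self_eq_norm_mul_norm, hzn, one_mul]
    have hmem : β z ∈ ((fun v : V => β v) '' {v : V | ⟪v, v⟫ = (1 : ℝ)}) :=
      ⟨z, hzmem, rfl⟩
    have hle : β z ≤ b := hb ▸ le_csSup hBdd hmem
    have hβz : β z = ‖w‖⁻¹ * β w := by rw [hz, map_smul, smul_eq_mul]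
    rw [hβz] at hle
    calc β w = ‖w‖ * (‖w‖⁻¹ * β w) := by field_simp
    _ ≤ ‖w‖ * b := by exact mul_le_mul_of_nonneg_left hle hnw.le
    _ = b * ‖w‖ := mul_comm _ _
  have hβge : ∀ w : V, w ≠ 0 → -(b * ‖w‖) ≤ β w := by
    intro w hw
    have := hβle (-w) (neg_ne_zero.mpr hw)
    rw [map_neg, norm_neg] at this
    linarith
  have hbounds : ∀ v : V, (1 - b) * Real.sqrt ⟪v, v⟫ ≤ F v ∧
      F v ≤ (1 + b) * Real.sqrt ⟪v, v⟫ := by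
    intro v
    rw [hs v, hF' v]
    by_cases hv : v = 0
    · subst hv; simp
    · have h1 := hβle v hv
      have h2 := hβge v hv
      constructor <;> nlinarith [norm_nonneg v]
  have hFpos : ∀ v : V, v ≠ 0 → 0 < F v := by
    intro v hv
    have hnv : (0 : ℝ) < ‖v‖ := norm_pos_iff.mpr hv
    have := (hbounds v).1
    rw [hs v] at this
    nlinarith
  refine ⟨hbounds, hFpos, ?_⟩
  intro v hv u hu
  have hnv : (0 : ℝ) < ‖v‖ := norm_pos_iff.mpr hv
  have hval := fderiv_fderiv_L β L hL' v hv u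
  rw [fundTensor, hval]
  have hFv : (0 : ℝ) < ‖v‖ + β v := by rw [← hF' v]; exact hFpos v hv
  set t : ℝ := ⟪v, u⟫ / ‖v‖ ^ 2 with ht
  set w : V := u - t • v with hwdef
  have hp : ⟪u, u⟫ - ⟪v, u⟫ ^ 2 / ‖v‖ ^ 2 = ⟪w, w⟫ := by
    rw [hwdef]
    simp only [inner_sub_left, inner_sub_right, real_inner_smul_left, real_inner_smul_right]
    rw [real_inner_self_eq_norm_sq v, real_inner_comm u v, ht]
    field_simp
    rw [real_inner_comm u v]
    ring
  set q : ℝ := ⟪v, u⟫ / ‖v‖ + β u with hq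
  have hterm1 : (0 : ℝ) ≤ (‖v‖ + β v) / ‖v‖ * (⟪u, u⟫ - ⟪v, u⟫ ^ 2 / ‖v‖ ^ 2) := by
    apply mul_nonneg (by positivity)
    rw [hp]; exact real_inner_self_nonneg
  by_cases hw : w = 0
  · -- u parallel to v : second term strictly positive
    have hu_eq : u = t • v := by rwa [hwdef, sub_eq_zero] at hw
    have ht0 : t ≠ 0 := by
      intro h; rw [h, zero_smul] at hu_eq; exact hu hu_eq
    have hqval : q = t * (‖v‖ + β v) := by
      rw [hq, hu_eq, real_inner_smul_right, map_smul, smul_eq_mul,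
        real_inner_self_eq_norm_sq]
      field_simp
    have hq0 : q ≠ 0 := by
      rw [hqval]; exact mul_ne_zero ht0 hFv.ne'
    have : (0 : ℝ) < q ^ 2 := by positivity
    rw [show (1:ℝ)/2 * (2 * ((‖v‖ + β v) / ‖v‖ * (⟪u, u⟫ - ⟪v, u⟫ ^ 2 / ‖v‖ ^ 2)
        + (⟪v, u⟫ / ‖v‖ + β u) ^ 2)) = (‖v‖ + β v) / ‖v‖ * (⟪u, u⟫ - ⟪v, u⟫ ^ 2 / ‖v‖ ^ 2)
        + (⟪v, u⟫ / ‖v‖ + β u) ^ 2 by ring]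
    rw [hq] at this
    linarith
  · -- first term strictly positive
    have hppos : (0 : ℝ) < ⟪u, u⟫ - ⟪v, u⟫ ^ 2 / ‖v‖ ^ 2 := by
      rw [hp, real_inner_self_eq_norm_sq w]
      exact pow_pos (norm_pos_iff.mpr hw) 2
    have h1 : (0 : ℝ) < (‖v‖ + β v) / ‖v‖ * (⟪u, u⟫ - ⟪v, u⟫ ^ 2 / ‖v‖ ^ 2) :=
      mul_pos (by positivity) hppos
    nlinarith [sq_nonneg (⟪v, u⟫ / ‖v‖ + β u)]
end

section
/- Let (V, ⟨·,·⟩) be a finite-dimensional real inner product space and W ∈ V with λ := 1 − ⟨W,W⟩ > 0, and let F be the Zermelo metric F(v) = [−⟨v,W⟩ + √(⟨v,W⟩² + ⟨v,v⟩·λ)]/λ. Define h(u,v) := (λ·⟨u,v⟩ + ⟨u,W⟩·⟨v,W⟩)/λ² and β(v) := −⟨v,W⟩/λ. Then: (i) h is an inner product on V; (ii) F(v) = √(h(v,v)) + β(v) for every v ∈ V, so F is of Randers type; (iii) sup{β(v) : h(v,v) = 1} < 1; and (iv) F(v) > 0 for every v ≠ 0. -/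
open scoped RealInnerProductSpace

/-- The Zermelo metric `F(v) = (−⟨v,W⟩ + √(⟨v,W⟩² + ⟨v,v⟩λ))/λ`, with
`λ = 1 − ⟨W,W⟩ > 0`, is of Randers type: setting
`h(u,v) = (λ⟨u,v⟩ + ⟨u,W⟩⟨v,W⟩)/λ²` and `β(v) = −⟨v,W⟩/λ`, one has
(i) `h` is an inner product on `V` (symmetric, bilinear and positive definite);
(ii) `F(v) = √(h(v,v)) + β(v)` for every `v`;
(iii) `sup {β v : h(v,v) = 1} < 1`; and (iv) `F(v) > 0` for every `v ≠ 0`. -/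
theorem zermelo_is_randers
    {V : Type*} [NormedAddCommGroup V] [InnerProductSpace ℝ V] [FiniteDimensional ℝ V]
    (W : V) (lam : ℝ) (hlam : lam = 1 - ⟪W, W⟫) (hlampos : 0 < lam)
    (F : V → ℝ)
    (hF : ∀ v : V, F v = (-⟪v, W⟫ + Real.sqrt (⟪v, W⟫ ^ 2 + ⟪v, v⟫ * lam)) / lam)
    (h : V → V → ℝ)
    (hh : ∀ u v : V, h u v = (lam * ⟪u, v⟫ + ⟪u, W⟫ * ⟪v, W⟫) / lam ^ 2)
    (β : V → ℝ)
    (hβ : ∀ v : V, β v = -⟪v, W⟫ / lam) :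
    ((∀ u v : V, h u v = h v u) ∧
      (∀ (a : ℝ) (u u' v : V), h (a • u + u') v = a * h u v + h u' v) ∧
      (∀ v : V, v ≠ 0 → 0 < h v v)) ∧
    (∀ v : V, F v = Real.sqrt (h v v) + β v) ∧
    sSup (β '' {v : V | h v v = 1}) < 1 ∧
    (∀ v : V, v ≠ 0 → 0 < F v) := by
  have hlam2 : (0:ℝ) < lam ^ 2 := by positivity
  -- positive definiteness
  have hpos : ∀ v : V, v ≠ 0 → 0 < h v v := by
    intro v hv
    rw [hh]
    have h1 : 0 < ⟪v, v⟫ := by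
      rw [real_inner_self_eq_norm_sq]
      have := norm_pos_iff.mpr hv
      positivity
    have h2 : (0:ℝ) ≤ ⟪v, W⟫ * ⟪v, W⟫ := mul_self_nonneg _
    positivity
  -- (ii)
  have hFR : ∀ v : V, F v = Real.sqrt (h v v) + β v := by
    intro v
    rw [hF, hβ, hh]
    have hx : (0:ℝ) ≤ ⟪v, W⟫ ^ 2 + ⟪v, v⟫ * lam := by
      have := real_inner_self_nonneg (x := v)
      positivity
    have : Real.sqrt ((lam * ⟪v, v⟫ + ⟪v, W⟫ * ⟪v, W⟫) / lam ^ 2)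
        = Real.sqrt (⟪v, W⟫ ^ 2 + ⟪v, v⟫ * lam) / lam := by
      rw [show lam * ⟪v, v⟫ + ⟪v, W⟫ * ⟪v, W⟫ = ⟪v, W⟫ ^ 2 + ⟪v, v⟫ * lam by ring,
        Real.sqrt_div hx, Real.sqrt_sq hlampos.le]
    rw [this]
    field_simp
    ring
  refine ⟨⟨?_, ?_, hpos⟩, hFR, ?_, ?_⟩
  · intro u v; rw [hh, hh, real_inner_comm]; ring
  · intro a u u' v
    rw [hh, hh, hh, inner_add_left, real_inner_smul_left, inner_add_left,
      real_inner_smul_left]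
    field_simp
    ring
  · -- (iii)
    have hW : ⟪W, W⟫ = 1 - lam := by rw [hlam]; ring
    have hWnn : (0:ℝ) ≤ 1 - lam := by rw [← hW]; exact real_inner_self_nonneg
    have hc : Real.sqrt (1 - lam) < 1 := by
      have := Real.sqrt_lt_sqrt hWnn (show 1 - lam < 1 by linarith)
      simpa using this
    refine lt_of_le_of_lt (Real.sSup_le ?_ (Real.sqrt_nonneg _)) hc
    rintro x ⟨v, hv, rfl⟩
    simp only [Set.mem_setOf_eq] at hv
    rw [hh] at hv
    have hvv : lam * ⟪v, v⟫ + ⟪v, W⟫ * ⟪v, W⟫ = lam ^ 2 := by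
      field_simp at hv; linarith
    have hcs : ⟪v, W⟫ * ⟪v, W⟫ ≤ ⟪v, v⟫ * ⟪W, W⟫ := real_inner_mul_inner_self_le v W
    rw [hW] at hcs
    have ht2 : ⟪v, W⟫ ^ 2 ≤ lam ^ 2 * (1 - lam) := by nlinarith [real_inner_self_nonneg (x := v)]
    have habs : -⟪v, W⟫ ≤ lam * Real.sqrt (1 - lam) := by
      have h1 : (-⟪v, W⟫) ^ 2 ≤ (lam * Real.sqrt (1 - lam)) ^ 2 := by
        rw [mul_pow, Real.sq_sqrt hWnn]; nlinarith
      have h2 : 0 ≤ lam * Real.sqrt (1 - lam) := by positivity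
      exact (le_abs_self _).trans (abs_le_of_sq_le_sq h1 h2)
    rw [hβ]
    rw [div_le_iff₀ hlampos]
    linarith [habs]
  · -- (iv)
    intro v hv
    rw [hF]
    have h1 : 0 < ⟪v, v⟫ := by
      rw [real_inner_self_eq_norm_sq]
      have := norm_pos_iff.mpr hv
      positivity
    have h2 : Real.sqrt (⟪v, W⟫ ^ 2) < Real.sqrt (⟪v, W⟫ ^ 2 + ⟪v, v⟫ * lam) := by
      apply Real.sqrt_lt_sqrt (sq_nonneg _); nlinarith
    rw [Real.sqrt_sq_eq_abs] at h2
    have : ⟪v, W⟫ ≤ |⟪v, W⟫| := le_abs_self _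
    apply div_pos _ hlampos
    linarith
end

section
/- Let (V, ⟨·,·⟩) be a finite-dimensional real inner product space and ω an arbitrary linear form on V (no smallness assumption). Then h(u,v) := ⟨u,v⟩ + ω(u)·ω(v) is an inner product on V, the Fermat metric F(v) = √(⟨v,v⟩ + ω(v)²) + ω(v) satisfies F(v) > 0 for every v ≠ 0, and the fundamental tensor of L = F² is positive definite at every v ≠ 0; that is, every Fermat metric is a Randers (Finsler) metric. -/
open scoped RealInnerProductSpace

section aux

variable {V : Type*} [NormedAddCommGroup V] [InnerProductSpace ℝ V] [FiniteDimensional ℝ V]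

lemma real_inner_self_pos' {x : V} (hx : x ≠ 0) : (0:ℝ) < ⟪x, x⟫ := by
  rw [real_inner_self_eq_norm_sq]
  have : ‖x‖ ≠ 0 := norm_ne_zero_iff.2 hx
  positivity

/-- The bilinear form `h(u,v) = ⟪u,v⟫ + ω u * ω v` as a continuous bilinear map. -/
noncomputable def Bform (ω : V →ₗ[ℝ] ℝ) : V →L[ℝ] V →L[ℝ] ℝ :=
  LinearMap.toContinuousLinearMap
    { toFun := fun x => innerSL ℝ x + ω x • LinearMap.toContinuousLinearMap ω
      map_add' := by
        intro x y; ext z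
        simp [inner_add_left]; ring
      map_smul' := by
        intro c x; ext z
        simp [real_inner_smul_left]; ring }

@[simp] lemma Bform_apply (ω : V →ₗ[ℝ] ℝ) (x y : V) :
    Bform ω x y = ⟪x, y⟫ + ω x * ω y := by
  simp only [Bform, LinearMap.coe_toContinuousLinearMap', LinearMap.coe_mk, AddHom.coe_mk,
    ContinuousLinearMap.add_apply, innerSL_apply_apply, ContinuousLinearMap.smul_apply, smul_eq_mul]

lemma Bform_symm (ω : V →ₗ[ℝ] ℝ) (x y : V) : Bform ω x y = Bform ω y x := by
  simp only [Bform_apply]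
  rw [real_inner_comm]
  ring

lemma Bform_pos (ω : V →ₗ[ℝ] ℝ) {x : V} (hx : x ≠ 0) : 0 < Bform ω x x := by
  have h1 : (0:ℝ) < ⟪x, x⟫ := real_inner_self_pos' hx
  have h2 : (0:ℝ) ≤ ω x * ω x := mul_self_nonneg _
  simp only [Bform_apply]; linarith

end aux

set_option maxHeartbeats 1000000 in
/-- For an arbitrary linear form `ω` (no smallness assumption):
`h(u,v) = ⟪u,v⟫ + ω(u)ω(v)` is an inner product on `V` (symmetric, bilinear and
positive definite), the Fermat metric `F(v) = √(⟪v,v⟫ + ω(v)²) + ω(v)` is positive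
for every `v ≠ 0`, and the fundamental tensor of `L = F²` is positive definite at
every `v ≠ 0`; that is, every Fermat metric is a Randers (Finsler) metric. -/
theorem fermat_is_randers
    {V : Type*} [NormedAddCommGroup V] [InnerProductSpace ℝ V] [FiniteDimensional ℝ V]
    (ω : V →ₗ[ℝ] ℝ)
    (h : V → V → ℝ)
    (hh : ∀ u v : V, h u v = ⟪u, v⟫ + ω u * ω v)
    (F L : V → ℝ)
    (hF : ∀ v : V, F v = Real.sqrt (⟪v, v⟫ + (ω v) ^ 2) + ω v)
    (hL : ∀ v : V, L v = (F v) ^ 2) :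
    ((∀ u v : V, h u v = h v u) ∧
      (∀ (a : ℝ) (u u' v : V), h (a • u + u') v = a * h u v + h u' v) ∧
      (∀ v : V, v ≠ 0 → 0 < h v v)) ∧
    (∀ v : V, v ≠ 0 → 0 < F v) ∧
    (∀ v : V, v ≠ 0 → ∀ u : V, u ≠ 0 → 0 < fundTensor L v u u) := by
  have hhB : ∀ u v : V, h u v = Bform ω u v := by intro u v; rw [hh]; simp
  -- positivity of F
  have hFpos : ∀ v : V, v ≠ 0 → 0 < F v := by
    intro v hv
    have h1 : (0:ℝ) < ⟪v, v⟫ := real_inner_self_pos' hv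
    have h2 : Real.sqrt ((ω v) ^ 2) < Real.sqrt (⟪v, v⟫ + (ω v) ^ 2) :=
      Real.sqrt_lt_sqrt (sq_nonneg _) (by linarith)
    have h3 : |ω v| < Real.sqrt (⟪v, v⟫ + (ω v) ^ 2) := by
      rwa [Real.sqrt_sq_eq_abs] at h2
    rw [hF]
    have h4 := neg_abs_le (ω v)
    linarith
  refine ⟨⟨?_, ?_, ?_⟩, hFpos, ?_⟩
  · intro u v; rw [hhB, hhB, Bform_symm]
  · intro a u u' v
    simp only [hhB, map_add, map_smul, ContinuousLinearMap.add_apply,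
      ContinuousLinearMap.smul_apply, smul_eq_mul]
  · intro v hv; rw [hhB]; exact Bform_pos ω hv
  -- the fundamental tensor
  intro v hv u hu
  set B : V →L[ℝ] V →L[ℝ] ℝ := Bform ω with hB
  set ωc := LinearMap.toContinuousLinearMap ω with hωc
  have hωc_apply : ∀ x : V, ωc x = ω x := fun x => rfl
  have hqpos : ∀ x : V, x ≠ 0 → 0 < B x x := fun x hx => Bform_pos ω hx
  have hFB : ∀ x : V, F x = Real.sqrt (B x x) + ω x := by
    intro x; rw [hF, hB]; rw [Bform_apply]; ring_nf
  -- the derivative of q x = B x x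
  have hq : ∀ x : V, HasFDerivAt (fun y => B y y) ((B + B.flip) x) x := by
    intro x
    have h1 := B.hasFDerivAt_of_bilinear (hasFDerivAt_id x) (hasFDerivAt_id x)
    refine h1.congr_fderiv ?_
    ext z
    simp [ContinuousLinearMap.precompR, ContinuousLinearMap.precompL]
  -- first derivative of L, on the set of nonzero vectors
  set G : V → (V →L[ℝ] ℝ) := fun x =>
    (2 * F x) • ((1 / (2 * Real.sqrt (B x x))) • ((B + B.flip) x) + ωc) with hG
  have hsne : ∀ x : V, x ≠ 0 → B x x ≠ 0 := fun x hx => ne_of_gt (hqpos x hx)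
  have hDF : ∀ x : V, x ≠ 0 →
      HasFDerivAt F ((1 / (2 * Real.sqrt (B x x))) • ((B + B.flip) x) + ωc) x := by
    intro x hx
    have h1 := ((hq x).sqrt (hsne x hx)).add ωc.hasFDerivAt
    exact h1.congr_of_eventuallyEq (by filter_upwards with y; rw [hFB y]; rfl)
  have hDL : ∀ x : V, x ≠ 0 → HasFDerivAt L (G x) x := by
    intro x hx
    have h1 : HasFDerivAt L
        (F x • ((1 / (2 * Real.sqrt (B x x))) • ((B + B.flip) x) + ωc)
          + F x • ((1 / (2 * Real.sqrt (B x x))) • ((B + B.flip) x) + ωc)) x :=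
      ((hDF x hx).mul (hDF x hx)).congr_of_eventuallyEq
        (by filter_upwards with y; rw [hL y, Pi.mul_apply]; ring)
    convert h1 using 1
    simp only [hG]
    rw [two_mul, add_smul]
  -- fderiv L agrees with G near v
  have hLG : fderiv ℝ L =ᶠ[nhds v] G := by
    have hopen : {x : V | x ≠ 0} ∈ nhds v := isOpen_compl_singleton.mem_nhds hv
    filter_upwards [hopen] with x hx
    exact (hDL x hx).fderiv
  -- second derivative: differentiate G at v
  set s : ℝ := Real.sqrt (B v v) with hs
  have hqv : 0 < B v v := hqpos v hv
  have hspos : 0 < s := Real.sqrt_pos.2 hqv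
  have hs2 : s ^ 2 = B v v := Real.sq_sqrt hqv.le
  have hsq : HasFDerivAt (fun y => Real.sqrt (B y y)) ((1 / (2 * s)) • ((B + B.flip) v)) v :=
    (hq v).sqrt (hsne v hv)
  -- derivative of the scalar 1/(2 √(B x x))
  have h2s : (2 : ℝ) * s ≠ 0 := by positivity
  have hmul2 : HasFDerivAt (fun y => 2 * Real.sqrt (B y y))
      ((2:ℝ) • ((1 / (2 * s)) • ((B + B.flip) v))) v := by
    simpa [smul_smul] using hsq.const_mul (2:ℝ)
  have hinv : HasFDerivAt (fun y => (2 * Real.sqrt (B y y))⁻¹)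
      ((-(((2:ℝ) * s) ^ 2)⁻¹) • ((2:ℝ) • ((1 / (2 * s)) • ((B + B.flip) v)))) v :=
    (hasDerivAt_inv h2s).comp_hasFDerivAt v hmul2
  have hA : HasFDerivAt (fun y => (1 / (2 * Real.sqrt (B y y))))
      ((-(((2:ℝ) * s) ^ 2)⁻¹) • ((2:ℝ) • ((1 / (2 * s)) • ((B + B.flip) v)))) v := by
    refine hinv.congr_of_eventuallyEq ?_
    filter_upwards with y; rw [one_div]
  -- derivative of H x = (1/(2 √(B x x))) • ((B+Bᵀ) x) + ωc
  have hlin : HasFDerivAt (fun y : V => (B + B.flip) y) (B + B.flip) v :=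
    (B + B.flip).hasFDerivAt
  set Da : V →L[ℝ] ℝ :=
    ((-(((2:ℝ) * s) ^ 2)⁻¹) • ((2:ℝ) • ((1 / (2 * s)) • ((B + B.flip) v)))) with hDa
  set MH : V →L[ℝ] (V →L[ℝ] ℝ) :=
    (1 / (2 * s)) • (B + B.flip) + Da.smulRight ((B + B.flip) v) with hMH
  have hH : HasFDerivAt
      (fun x => (1 / (2 * Real.sqrt (B x x))) • ((B + B.flip) x) + ωc) MH v := by
    exact (hA.smul hlin).add_const ωc
  -- derivative of c x = 2 * F x
  set DF : V →L[ℝ] ℝ := (1 / (2 * s)) • ((B + B.flip) v) + ωc with hDFv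
  have hc : HasFDerivAt (fun x => 2 * F x) ((2:ℝ) • DF) v := by
    exact (hDF v hv).const_mul (2:ℝ)
  set MG : V →L[ℝ] (V →L[ℝ] ℝ) :=
    (2 * F v) • MH + ((2:ℝ) • DF).smulRight ((1 / (2 * s)) • ((B + B.flip) v) + ωc) with hMG
  have hGd : HasFDerivAt G MG v := by
    exact hc.smul hH
  have hfd : fderiv ℝ (fderiv ℝ L) v = MG := by
    rw [hLG.fderiv_eq]; exact hGd.fderiv
  -- evaluate
  set t : ℝ := B v u with ht
  set cB : ℝ := B u u with hcB
  have hBsymm : B u v = t := Bform_symm ω u v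
  have happly : (MG u) u =
      (2 * F v) * ((1 / (2 * s)) * (cB + cB)
        + ((-(((2:ℝ) * s) ^ 2)⁻¹) * ((2:ℝ) * ((1 / (2 * s)) * (t + t)))) * (t + t))
      + (2 * ((1 / (2 * s)) * (t + t) + ω u)) * ((1 / (2 * s)) * (t + t) + ω u) := by
    rw [hMG, hMH, hDa, hDFv]
    simp only [ContinuousLinearMap.add_apply, ContinuousLinearMap.smul_apply,
      ContinuousLinearMap.smulRight_apply, ContinuousLinearMap.flip_apply,
      smul_eq_mul, hBsymm, hωc_apply, ← ht, ← hcB]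
  have hval : fundTensor L v u u =
      F v * (cB / s - t ^ 2 / s ^ 3) + (t / s + ω u) ^ 2 := by
    rw [fundTensor, hfd, happly]
    have hsne' : s ≠ 0 := ne_of_gt hspos
    field_simp
    ring
  rw [hval]
  have hBvv' : 0 < B v v := hqv
  have hsne' : s ≠ 0 := ne_of_gt hspos
  clear_value B ωc s t cB
  -- positivity
  have hFv : 0 < F v := hFpos v hv
  have hkey : 0 ≤ cB * B v v - t ^ 2 ∧ (cB * B v v - t ^ 2 = 0 → t / s + ω u ≠ 0) := by
    by_cases hpar : ∃ k : ℝ, u = k • v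
    · obtain ⟨k, hk⟩ := hpar
      have hk0 : k ≠ 0 := by rintro rfl; simp at hk; exact hu hk
      have htk : t = k * B v v := by
        rw [ht, hk, map_smul, smul_eq_mul]
      have hck : cB = k ^ 2 * B v v := by
        rw [hcB, hk]
        simp only [map_smul, ContinuousLinearMap.smul_apply, smul_eq_mul]
        ring
      constructor
      · have e : cB * B v v - t ^ 2 = 0 := by rw [htk, hck]; ring
        linarith
      · intro _
        have hωu : ω u = k * ω v := by rw [hk, map_smul, smul_eq_mul]
        have hP : t / s + ω u = k * F v := by
          rw [htk, hωu, hFB v, ← hs]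
          have hBvv : B v v = s * s := by rw [← hs2]; ring
          rw [hBvv]
          field_simp
        rw [hP]
        exact mul_ne_zero hk0 (ne_of_gt hFv)
    · have hw : u - (t / B v v) • v ≠ 0 := by
        intro hzero
        exact hpar ⟨t / B v v, by rwa [sub_eq_zero] at hzero⟩
      have hpos : 0 < B (u - (t / B v v) • v) (u - (t / B v v) • v) := hqpos _ hw
      have hexp : B (u - (t / B v v) • v) (u - (t / B v v) • v)
          = cB - t ^ 2 / B v v := by
        have h9 : B v v ≠ 0 := ne_of_gt hBvv'
        simp only [map_sub, map_smul, ContinuousLinearMap.sub_apply,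
          ContinuousLinearMap.smul_apply, smul_eq_mul, hBsymm, ← ht, ← hcB]
        field_simp
        ring
      have hlt : 0 < cB * B v v - t ^ 2 := by
        rw [hexp] at hpos
        have h5 := mul_pos hpos hqv
        have h6 : (cB - t ^ 2 / B v v) * B v v = cB * B v v - t ^ 2 := by
          field_simp
        linarith [h6 ▸ h5]
      exact ⟨hlt.le, fun habs => absurd habs (by linarith)⟩
  obtain ⟨hk1, hk2⟩ := hkey
  have hrw : cB / s - t ^ 2 / s ^ 3 = (cB * B v v - t ^ 2) / s ^ 3 := by
    rw [← hs2]
    have hsne' : s ≠ 0 := ne_of_gt hspos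
    field_simp
  rcases eq_or_lt_of_le hk1 with heq | hlt
  · have hP := hk2 heq.symm
    have h7 : 0 < (t / s + ω u) ^ 2 := by positivity
    have h8 : F v * (cB / s - t ^ 2 / s ^ 3) = 0 := by
      rw [hrw, ← heq]; simp
    linarith
  · have h7 : 0 < F v * (cB / s - t ^ 2 / s ^ 3) := by
      apply mul_pos hFv
      rw [hrw]
      exact div_pos hlt (by positivity)
    have h8 := sq_nonneg (t / s + ω u)
    linarith
end

section
/- Let (V, ⟨·,·⟩) be a finite-dimensional real inner product space and ω a linear form on V, with g_L the flat standard stationary Lorentzian form on ℝ × V and F the Fermat metric. Let γ : [a,b] → ℝ × V be a smooth curve, γ(s) = (t(s), x(s)), with t'(s) > 0 and g_L(γ'(s), γ'(s)) = 0 for every s ∈ [a,b] (a future-directed lightlike curve). Then the arrival time satisfies t(b) − t(a) = ∫_a^b F(x'(s)) ds, i.e. it equals the Fermat length of the spatial projection x. -/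
open scoped RealInnerProductSpace

/-- The flat standard stationary Lorentzian form on `ℝ × V`:
`g_L((τ,v),(σ,u)) = −τσ + τ·ω(u) + σ·ω(v) + ⟨v,u⟩`. -/
noncomputable def stdStationaryForm {V : Type*} [NormedAddCommGroup V]
    [InnerProductSpace ℝ V] (ω : V →ₗ[ℝ] ℝ) (x y : ℝ × V) : ℝ :=
  -(x.1 * y.1) + x.1 * ω y.2 + y.1 * ω x.2 + ⟪x.2, y.2⟫

/-- Fermat's principle computation: if `γ(s) = (t(s), x(s))` is a smooth
future-directed (`t' > 0`) lightlike (`g_L(γ',γ') = 0`) curve on `[a,b]` for the flat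
standard stationary metric, then the arrival time `t(b) − t(a)` equals the Fermat
length `∫_a^b F(x'(s)) ds` of the spatial projection, where
`F(v) = √(⟨v,v⟩ + ω(v)²) + ω(v)` is the Fermat metric. -/
theorem arrival_time_eq_fermat_length
    {V : Type*} [NormedAddCommGroup V] [InnerProductSpace ℝ V] [FiniteDimensional ℝ V]
    (ω : V →ₗ[ℝ] ℝ)
    (F : V → ℝ)
    (hF : ∀ v : V, F v = Real.sqrt (⟪v, v⟫ + (ω v) ^ 2) + ω v)
    (a b : ℝ) (hab : a ≤ b)
    (t : ℝ → ℝ) (x : ℝ → V)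
    (ht : ContDiff ℝ (⊤ : ℕ∞) t) (hx : ContDiff ℝ (⊤ : ℕ∞) x)
    (hfuture : ∀ s ∈ Set.Icc a b, 0 < deriv t s)
    (hlight : ∀ s ∈ Set.Icc a b,
      stdStationaryForm ω (deriv t s, deriv x s) (deriv t s, deriv x s) = 0) :
    t b - t a = ∫ s in a..b, F (deriv x s) := by
  have key : ∀ s ∈ Set.Icc a b, F (deriv x s) = deriv t s := by
    intro s hs
    have h0 := hlight s hs
    have hT := hfuture s hs
    set T := deriv t s
    set X := deriv x s
    simp only [stdStationaryForm] at h0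
    have hinn : (0:ℝ) ≤ ⟪X, X⟫ := real_inner_self_nonneg
    have hsq : ⟪X, X⟫ + (ω X) ^ 2 = (T - ω X) ^ 2 := by nlinarith [h0]
    have hnn : 0 ≤ T - ω X := by nlinarith [hsq, hT, hinn]
    rw [hF, hsq, Real.sqrt_sq_eq_abs, abs_of_nonneg hnn]
    ring
  have hcont : Continuous (deriv t) := ht.continuous_deriv (by exact_mod_cast le_top)
  have hint : ∫ s in a..b, deriv t s = t b - t a :=
    intervalIntegral.integral_deriv_eq_sub
      (fun s _ => (ht.differentiable (by simp)).differentiableAt)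
      (hcont.intervalIntegrable a b)
  rw [← hint]
  apply intervalIntegral.integral_congr
  intro s hs
  rw [Set.uIcc_of_le hab] at hs
  exact (key s hs).symm
end

section
/- Let (V, ⟨·,·⟩) be a finite-dimensional real inner product space and ω a linear form on V, with g_L the flat standard stationary Lorentzian form on ℝ × V and F the Fermat metric. Let p, q ∈ V and t₀ ∈ ℝ. Then there exists a smooth curve γ : [0,1] → ℝ × V, γ(s) = (t(s), x(s)), with γ(0) = (0,p), γ(1) = (t₀,q), t'(s) > 0 and g_L(γ'(s), γ'(s)) < 0 for every s (a future-directed timelike curve from (0,p) to (t₀,q)), if and only if t₀ > F(q − p). In other words, the intersection of the chronological future of (0,p) with the slice {t = t₀} is {t₀} × B⁺(p, t₀), the open forward Fermat ball of center p and radius t₀. -/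
open scoped RealInnerProductSpace

/-- Cauchy–Schwarz for the auxiliary inner product `⟪w,v⟫ + ω w * ω v`. -/
lemma fermat_cs {V : Type*} [NormedAddCommGroup V] [InnerProductSpace ℝ V]
    (ω : V →ₗ[ℝ] ℝ) (w v : V) :
    ⟪w, v⟫ + ω w * ω v ≤
      Real.sqrt (⟪w, w⟫ + (ω w) ^ 2) * Real.sqrt (⟪v, v⟫ + (ω v) ^ 2) := by
  have hw : ⟪w, w⟫ = ‖w‖ ^ 2 := real_inner_self_eq_norm_sq w
  have hv : ⟪v, v⟫ = ‖v‖ ^ 2 := real_inner_self_eq_norm_sq v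
  have habs : |⟪w, v⟫| ≤ ‖w‖ * ‖v‖ := abs_real_inner_le_norm w v
  have h1 : ⟪w, v⟫ ≤ |⟪w, v⟫| := le_abs_self _
  have h2 : -|⟪w, v⟫| ≤ ⟪w, v⟫ := neg_abs_le _
  have h5 : ⟪w, v⟫ * (ω w * ω v) ≤ ‖w‖ * ‖v‖ * (|ω w| * |ω v|) := by
    calc ⟪w, v⟫ * (ω w * ω v) ≤ |⟪w, v⟫ * (ω w * ω v)| := le_abs_self _
      _ = |⟪w, v⟫| * (|ω w| * |ω v|) := by rw [abs_mul, abs_mul]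
      _ ≤ ‖w‖ * ‖v‖ * (|ω w| * |ω v|) := by
          apply mul_le_mul_of_nonneg_right habs (by positivity)
  have h6 : ⟪w, v⟫ ^ 2 ≤ (‖w‖ * ‖v‖) ^ 2 := by
    rw [← sq_abs ⟪w, v⟫]; exact pow_le_pow_left₀ (abs_nonneg _) habs 2
  have key : (⟪w, v⟫ + ω w * ω v) ^ 2 ≤ (⟪w, w⟫ + (ω w) ^ 2) * (⟪v, v⟫ + (ω v) ^ 2) := by
    rw [hw, hv]
    nlinarith [h5, h6, sq_nonneg (‖w‖ * |ω v| - ‖v‖ * |ω w|), sq_abs (ω w), sq_abs (ω v)]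
  calc ⟪w, v⟫ + ω w * ω v ≤ Real.sqrt ((⟪w, v⟫ + ω w * ω v) ^ 2) := by
        rw [Real.sqrt_sq_eq_abs]; exact le_abs_self _
    _ ≤ Real.sqrt ((⟪w, w⟫ + (ω w) ^ 2) * (⟪v, v⟫ + (ω v) ^ 2)) := Real.sqrt_le_sqrt key
    _ = Real.sqrt (⟪w, w⟫ + (ω w) ^ 2) * Real.sqrt (⟪v, v⟫ + (ω v) ^ 2) :=
        Real.sqrt_mul (add_nonneg real_inner_self_nonneg (sq_nonneg _)) _

/-- In the flat standard stationary spacetime, there is a smooth future-directed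
timelike curve from `(0,p)` to `(t₀,q)` if and only if `t₀ > F(q − p)`, where `F` is
the Fermat metric: the chronological future of `(0,p)` meets the slice `t = t₀` in
`{t₀} × B⁺(p,t₀)`, the open forward Fermat ball of center `p` and radius `t₀`. -/
theorem chronological_future_eq_fermat_ball
    {V : Type*} [NormedAddCommGroup V] [InnerProductSpace ℝ V] [FiniteDimensional ℝ V]
    (ω : V →ₗ[ℝ] ℝ)
    (F : V → ℝ)
    (hF : ∀ v : V, F v = Real.sqrt (⟪v, v⟫ + (ω v) ^ 2) + ω v)
    (p q : V) (t₀ : ℝ) :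
    (∃ t : ℝ → ℝ, ∃ x : ℝ → V,
      ContDiff ℝ (⊤ : ℕ∞) t ∧ ContDiff ℝ (⊤ : ℕ∞) x ∧
      t 0 = 0 ∧ x 0 = p ∧ t 1 = t₀ ∧ x 1 = q ∧
      ∀ s ∈ Set.Icc (0 : ℝ) 1, 0 < deriv t s ∧
        stdStationaryForm ω (deriv t s, deriv x s) (deriv t s, deriv x s) < 0)
    ↔ F (q - p) < t₀ := by
  set w : V := q - p with hw
  have hInonneg : (0:ℝ) ≤ ⟪w, w⟫ + (ω w) ^ 2 :=
    add_nonneg real_inner_self_nonneg (sq_nonneg _)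
  set A : ℝ := Real.sqrt (⟪w, w⟫ + (ω w) ^ 2) with hAdef
  have hA2 : A ^ 2 = ⟪w, w⟫ + (ω w) ^ 2 := Real.sq_sqrt hInonneg
  have hA0 : 0 ≤ A := Real.sqrt_nonneg _
  constructor
  · rintro ⟨t, x, ht, hx, ht0, hx0, ht1, hx1, hsc⟩
    -- the supporting linear functional
    obtain ⟨ℓ, hℓ⟩ : ∃ ℓ : V →L[ℝ] ℝ, ∀ v : V, ℓ v = (⟪w, v⟫ + ω w * ω v) / A + ω v := by
      refine ⟨A⁻¹ • (innerSL ℝ w + (ω w) • LinearMap.toContinuousLinearMap ω) +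
        LinearMap.toContinuousLinearMap ω, fun v => ?_⟩
      simp [ContinuousLinearMap.add_apply, ContinuousLinearMap.smul_apply,
        innerSL_apply_apply, div_eq_inv_mul, mul_add]
    have hFl : ∀ v : V, ℓ v ≤ F v := by
      intro v
      rw [hℓ, hF]
      have hcs := fermat_cs ω w v
      rcases eq_or_lt_of_le hA0 with hA | hA
      · rw [← hA, div_zero]
        have : 0 ≤ Real.sqrt (⟪v, v⟫ + (ω v) ^ 2) := Real.sqrt_nonneg _
        linarith
      · have : (⟪w, v⟫ + ω w * ω v) / A ≤ Real.sqrt (⟪v, v⟫ + (ω v) ^ 2) := by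
          rw [div_le_iff₀ hA]
          calc ⟪w, v⟫ + ω w * ω v ≤ A * Real.sqrt (⟪v, v⟫ + (ω v) ^ 2) := hcs
            _ = Real.sqrt (⟪v, v⟫ + (ω v) ^ 2) * A := mul_comm _ _
        linarith
    have hFw : F w = ℓ w := by
      rw [hℓ, hF]
      have hnum : ⟪w, w⟫ + ω w * ω w = A ^ 2 := by rw [hA2]; ring
      rw [hnum, ← hAdef]
      rcases eq_or_lt_of_le hA0 with hA | hA
      · rw [← hA]; norm_num
      · rw [sq, mul_div_assoc, div_self hA.ne', mul_one]
    -- calculus facts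
    have htd : Differentiable ℝ t := ht.differentiable (by simp)
    have hxd : Differentiable ℝ x := hx.differentiable (by simp)
    have htc : Continuous (deriv t) := ht.continuous_deriv (by exact_mod_cast le_top)
    have hxc : Continuous (deriv x) := hx.continuous_deriv (by exact_mod_cast le_top)
    have hti : IntervalIntegrable (deriv t) MeasureTheory.volume 0 1 :=
      htc.intervalIntegrable 0 1
    have hxi : IntervalIntegrable (deriv x) MeasureTheory.volume 0 1 :=
      hxc.intervalIntegrable 0 1
    have hℓi : IntervalIntegrable (fun s => ℓ (deriv x s)) MeasureTheory.volume 0 1 :=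
      (ℓ.continuous.comp hxc).intervalIntegrable 0 1
    have hT : (∫ s in (0:ℝ)..1, deriv t s) = t₀ := by
      rw [intervalIntegral.integral_deriv_eq_sub (fun s _ => htd s) hti, ht1, ht0, sub_zero]
    have hX : (∫ s in (0:ℝ)..1, deriv x s) = w := by
      rw [intervalIntegral.integral_deriv_eq_sub (fun s _ => hxd s) hxi, hx1, hx0]
    have hcomm : (∫ s in (0:ℝ)..1, ℓ (deriv x s)) = ℓ w := by
      rw [ℓ.intervalIntegral_comp_comm hxi, hX]
    -- pointwise strict inequality
    have hpt : ∀ s ∈ Set.Icc (0:ℝ) 1, ℓ (deriv x s) < deriv t s := by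
      intro s hs
      obtain ⟨h1, h2⟩ := hsc s hs
      refine lt_of_le_of_lt (hFl _) ?_
      rw [hF]
      set T := deriv t s
      set X := deriv x s
      simp only [stdStationaryForm] at h2
      have hII : (0:ℝ) ≤ ⟪X, X⟫ := real_inner_self_nonneg
      have h3 : 0 < T - ω X := by nlinarith
      have h4 : Real.sqrt (⟪X, X⟫ + (ω X) ^ 2) < T - ω X := by
        rw [Real.sqrt_lt' h3]
        nlinarith
      linarith
    have hlt : 0 < ∫ s in (0:ℝ)..1, (deriv t s - ℓ (deriv x s)) := by
      refine intervalIntegral.intervalIntegral_pos_of_pos_on (hti.sub hℓi) ?_ one_pos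
      intro s hs
      exact sub_pos.2 (hpt s ⟨hs.1.le, hs.2.le⟩)
    rw [intervalIntegral.integral_sub hti hℓi, hT, hcomm] at hlt
    rw [hFw]
    linarith
  · intro hlt
    rw [hF] at hlt
    have hgt : A < t₀ - ω w := by rw [hAdef]; linarith
    have hFnn : 0 ≤ A + ω w := by
      have h1 : |ω w| ≤ A := by
        rw [hAdef, ← Real.sqrt_sq_eq_abs]
        exact Real.sqrt_le_sqrt (by nlinarith [real_inner_self_nonneg (x := w)])
      have := neg_abs_le (ω w)
      linarith
    have ht₀ : 0 < t₀ := by linarith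
    refine ⟨fun s => s * t₀, fun s => p + s • (q - p), contDiff_id.mul contDiff_const,
      contDiff_const.add (contDiff_id.smul contDiff_const), by simp, by simp, one_mul t₀,
      by simp, ?_⟩
    intro s _
    have hdt : deriv (fun s : ℝ => s * t₀) s = t₀ := (hasDerivAt_mul_const t₀).deriv
    have hdx : deriv (fun s : ℝ => p + s • (q - p)) s = q - p := by
      have h : HasDerivAt (fun s : ℝ => p + s • (q - p)) ((1:ℝ) • (q - p)) s :=
        ((hasDerivAt_id s).smul_const (q - p)).const_add p
      rw [one_smul] at h
      exact h.deriv
    rw [hdt, hdx]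
    constructor
    · exact ht₀
    · simp only [stdStationaryForm, ← hw]
      nlinarith [hA2, hA0, hgt]
end

section
/- Let V be a finite-dimensional real vector space and L : V → ℝ a twice continuously differentiable function that is positively homogeneous of degree 2, i.e. L(λv) = λ²L(v) for all λ > 0 and all v ∈ V. Then L is a quadratic form: L(v) = B(v,v) for the symmetric bilinear form B = (1/2)·D²L(0). In particular, a Finsler metric whose square is smooth at the zero section comes from a Riemannian (quadratic) metric. -/
/-- A twice continuously differentiable function `L : V → ℝ` on a finite-dimensional
real vector space that is positively homogeneous of degree 2 (`L(λv) = λ²L(v)` for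
all `λ > 0`) is a quadratic form: `L(v) = B(v,v)` where `B = (1/2)·D²L(0)` is one
half of the Hessian of `L` at the origin. In particular, a Finsler metric whose
square is smooth at the zero section comes from a Riemannian (quadratic) metric. -/
theorem homogeneous_C2_is_quadratic
    {V : Type*} [NormedAddCommGroup V] [NormedSpace ℝ V] [FiniteDimensional ℝ V]
    (L : V → ℝ)
    (hL : ContDiff ℝ 2 L)
    (hhom : ∀ c : ℝ, 0 < c → ∀ v : V, L (c • v) = c ^ 2 * L v) :
    ∀ v : V, L v = (1 / 2) * fderiv ℝ (fderiv ℝ L) 0 v v := by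
  intro v
  set F := fderiv ℝ L with hF
  set h : ℝ → ℝ := fun t => F (t • v) v with hh
  set g : ℝ → ℝ := fun t => L (t • v) with hgdef
  have hL1 : Differentiable ℝ L := hL.differentiable two_ne_zero
  have hcurve : ∀ t : ℝ, HasDerivAt (fun s : ℝ => s • v) v t := by
    intro t
    simpa using (hasDerivAt_id t).smul_const v
  have hderiv : ∀ t : ℝ, HasDerivAt g (h t) t := fun t =>
    (hL1 (t • v)).hasFDerivAt.comp_hasDerivAt t (hcurve t)
  have hgC : ContDiff ℝ 2 g := hL.comp ((contDiff_id).smul contDiff_const)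
  have hdg : deriv g = h := funext fun t => (hderiv t).deriv
  have hh1 : ContDiff ℝ 1 h := by
    rw [← hdg]
    have h2 : ContDiff ℝ ((1 : ℕ∞) + 1) g := by
      exact_mod_cast hgC
    exact ((contDiff_succ_iff_deriv).mp h2).2.2
  have hφ : Continuous (deriv h) := hh1.continuous_deriv le_rfl
  -- h on (0, ∞)
  have hEq : ∀ t ∈ Set.Ioi (0 : ℝ), h t = 2 * t * L v := by
    intro t ht
    have hloc : g =ᶠ[nhds t] fun s => s ^ 2 * L v := by
      filter_upwards [Ioi_mem_nhds ht] with s hs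
      exact hhom s hs v
    have h1 : deriv g t = deriv (fun s : ℝ => s ^ 2 * L v) t := hloc.deriv_eq
    have h2 : HasDerivAt (fun s : ℝ => s ^ 2 * L v) (2 * t * L v) t := by
      simpa [mul_comm] using (hasDerivAt_pow 2 t).mul_const (L v)
    rw [← hdg, h1, h2.deriv]
  have hEq' : ∀ t ∈ Set.Ioi (0 : ℝ), deriv h t = 2 * L v := by
    intro t ht
    have hloc : h =ᶠ[nhds t] fun s => 2 * s * L v := by
      filter_upwards [Ioi_mem_nhds ht] with s hs
      exact hEq s hs
    have h2 : HasDerivAt (fun s : ℝ => 2 * s * L v) (2 * L v) t := by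
      simpa [mul_comm, mul_assoc] using ((hasDerivAt_id t).const_mul 2).mul_const (L v)
    rw [hloc.deriv_eq, h2.deriv]
  -- deriv h 0 = 2 * L v by continuity
  have hlim : Filter.Tendsto (deriv h) (nhdsWithin 0 (Set.Ioi 0)) (nhds (2 * L v)) := by
    apply Filter.Tendsto.congr' _ tendsto_const_nhds
    filter_upwards [self_mem_nhdsWithin] with t ht
    exact (hEq' t ht).symm
  have h0 : deriv h 0 = 2 * L v :=
    tendsto_nhds_unique ((hφ.continuousAt).continuousWithinAt) hlim
  -- deriv h 0 = D²L(0) v v by chain rule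
  have hF1 : ContDiff ℝ 1 F := hL.fderiv_right le_rfl
  have hFd : HasFDerivAt F (fderiv ℝ F 0) ((0 : ℝ) • v) := by
    rw [zero_smul]
    exact (hF1.differentiable one_ne_zero 0).hasFDerivAt
  have h2 : HasDerivAt (fun t : ℝ => F (t • v)) (fderiv ℝ F 0 v) 0 :=
    hFd.comp_hasDerivAt 0 (hcurve 0)
  have h3 : HasDerivAt h (fderiv ℝ F 0 v v) 0 := by
    simpa using h2.clm_apply (hasDerivAt_const 0 v)
  have hD : fderiv ℝ F 0 v v = 2 * L v := by rw [← h3.deriv, h0]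
  rw [hD]
  ring
end

section
/- Let V be a finite-dimensional real vector space of dimension n ≥ 2, η a symmetric bilinear form on V of Lorentzian signature (one negative, n−1 positive directions), m > 0 a real number and a ∈ V a fixed vector. On the open set A = {v ∈ V : η(v,v) < 0} of η-timelike vectors, define the Lorentz-violating Lagrangian F(v) = m·√(−η(v,v)) + η(v,a) and L = F². Then for v ∈ A, the fundamental tensor of L at v is degenerate if and only if F(v) = m·√(−η(v,v)) + η(v,a) = 0. -/
section AuxCalculus

variable {V : Type*} [NormedAddCommGroup V] [NormedSpace ℝ V]

/-- First-derivative candidate for the Lorentz-violating Lagrangian. -/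
noncomputable def lvDeriv (ηc : V →L[ℝ] V →L[ℝ] ℝ) (m : ℝ) (a : V) : V → V →L[ℝ] ℝ :=
  fun x => (2 * (m * Real.sqrt (-(ηc x x)) + ηc x a)) •
    ((-(m / Real.sqrt (-(ηc x x)))) • ηc x + ηc a)

set_option maxHeartbeats 1000000 in
theorem lv_hasFDerivAt (ηc : V →L[ℝ] V →L[ℝ] ℝ) (hsym : ∀ x y : V, ηc x y = ηc y x)
    (m : ℝ) (a : V) (x : V) (hx : ηc x x < 0) :
    HasFDerivAt (fun y => (m * Real.sqrt (-(ηc y y)) + ηc y a) ^ 2) (lvDeriv ηc m a x) x := by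
  have hpos : (0:ℝ) < -(ηc x x) := by linarith
  have hR : 0 < Real.sqrt (-(ηc x x)) := Real.sqrt_pos.mpr hpos
  have hRne : Real.sqrt (-(ηc x x)) ≠ 0 := ne_of_gt hR
  have hQ : HasFDerivAt (fun y : V => ηc y y)
      ((ηc x).comp (ContinuousLinearMap.id ℝ V) + ηc.flip x) x :=
    (ηc.hasFDerivAt).clm_apply (hasFDerivAt_id x)
  have hsq : HasFDerivAt (fun y : V => Real.sqrt (-(ηc y y)))
      ((1 / (2 * Real.sqrt (-(ηc x x)))) •
        (-((ηc x).comp (ContinuousLinearMap.id ℝ V) + ηc.flip x))) x :=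
    hQ.neg.sqrt (ne_of_gt hpos)
  have hFd : HasFDerivAt (fun y : V => m * Real.sqrt (-(ηc y y)) + ηc y a)
      (m • ((1 / (2 * Real.sqrt (-(ηc x x)))) •
        (-((ηc x).comp (ContinuousLinearMap.id ℝ V) + ηc.flip x))) + ηc.flip a) x :=
    (hsq.const_mul m).add (ηc.flip a).hasFDerivAt
  have hmul := hFd.mul hFd
  have : (fun y : V => (m * Real.sqrt (-(ηc y y)) + ηc y a) ^ 2)
      = fun y : V => (m * Real.sqrt (-(ηc y y)) + ηc y a) *
        (m * Real.sqrt (-(ηc y y)) + ηc y a) := by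
    funext y; ring
  rw [this]
  convert hmul using 1
  on_goal 1 => rfl
  on_goal 1 => rfl
  on_goal 1 => rfl
  ext w
  simp only [lvDeriv, ContinuousLinearMap.add_apply, ContinuousLinearMap.smul_apply,
    ContinuousLinearMap.coe_comp', Function.comp_apply, ContinuousLinearMap.coe_id', id_eq,
    ContinuousLinearMap.flip_apply, ContinuousLinearMap.neg_apply, smul_eq_mul]
  rw [hsym w x, hsym a w]
  field_simp
  ring

set_option maxHeartbeats 1000000 in
theorem lvDeriv_hasFDerivAt (ηc : V →L[ℝ] V →L[ℝ] ℝ) (hsym : ∀ x y : V, ηc x y = ηc y x)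
    (m : ℝ) (hm : m ≠ 0) (a : V) (v : V) (hv : ηc v v < 0) :
    ∃ D : V →L[ℝ] V →L[ℝ] ℝ, HasFDerivAt (lvDeriv ηc m a) D v ∧
      ∀ u w : V, D u w =
        2 * ((m * Real.sqrt (-(ηc v v)) + ηc v a) *
            (-(m / Real.sqrt (-(ηc v v))) * ηc u w
              - m / Real.sqrt (-(ηc v v)) ^ 3 * (ηc v u * ηc v w))
          + (-(m / Real.sqrt (-(ηc v v))) * ηc v u + ηc u a)
            * (-(m / Real.sqrt (-(ηc v v))) * ηc v w + ηc w a)) := by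
  have hpos : (0:ℝ) < -(ηc v v) := by linarith
  have hR : 0 < Real.sqrt (-(ηc v v)) := Real.sqrt_pos.mpr hpos
  have hRne : Real.sqrt (-(ηc v v)) ≠ 0 := ne_of_gt hR
  have hQ : HasFDerivAt (fun y : V => ηc y y)
      ((ηc v).comp (ContinuousLinearMap.id ℝ V) + ηc.flip v) v :=
    (ηc.hasFDerivAt).clm_apply (hasFDerivAt_id v)
  have hsq : HasFDerivAt (fun y : V => Real.sqrt (-(ηc y y)))
      ((1 / (2 * Real.sqrt (-(ηc v v)))) •
        (-((ηc v).comp (ContinuousLinearMap.id ℝ V) + ηc.flip v))) v :=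
    hQ.neg.sqrt (ne_of_gt hpos)
  have hinv : HasFDerivAt (fun y : V => (Real.sqrt (-(ηc y y)))⁻¹)
      ((-(Real.sqrt (-(ηc v v)) ^ 2)⁻¹) • ((1 / (2 * Real.sqrt (-(ηc v v)))) •
        (-((ηc v).comp (ContinuousLinearMap.id ℝ V) + ηc.flip v)))) v :=
    (hasDerivAt_inv hRne).comp_hasFDerivAt v hsq
  have hc : HasFDerivAt (fun y : V => -(m / Real.sqrt (-(ηc y y))))
      (-(m • ((-(Real.sqrt (-(ηc v v)) ^ 2)⁻¹) • ((1 / (2 * Real.sqrt (-(ηc v v)))) •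
        (-((ηc v).comp (ContinuousLinearMap.id ℝ V) + ηc.flip v)))))) v := by
    simp only [div_eq_mul_inv]
    exact (hinv.const_mul m).neg
  have hφ : HasFDerivAt (fun y : V => (-(m / Real.sqrt (-(ηc y y)))) • ηc y + ηc a)
      ((-(m / Real.sqrt (-(ηc v v)))) • (ηc : V →L[ℝ] V →L[ℝ] ℝ)
        + (-(m • ((-(Real.sqrt (-(ηc v v)) ^ 2)⁻¹) • ((1 / (2 * Real.sqrt (-(ηc v v)))) •
            (-((ηc v).comp (ContinuousLinearMap.id ℝ V) + ηc.flip v)))))).smulRight (ηc v)) v :=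
    (hc.smul ηc.hasFDerivAt).add_const (ηc a)
  have hs : HasFDerivAt (fun y : V => 2 * (m * Real.sqrt (-(ηc y y)) + ηc y a))
      ((2:ℝ) • (m • ((1 / (2 * Real.sqrt (-(ηc v v)))) •
        (-((ηc v).comp (ContinuousLinearMap.id ℝ V) + ηc.flip v))) + ηc.flip a)) v :=
    ((hsq.const_mul m).add (ηc.flip a).hasFDerivAt).const_mul 2
  refine ⟨_, hs.smul hφ, ?_⟩
  intro u w
  set R := Real.sqrt (-(ηc v v)) with hRdef
  simp only [ContinuousLinearMap.add_apply, ContinuousLinearMap.smul_apply,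
    ContinuousLinearMap.smulRight_apply, ContinuousLinearMap.coe_comp', Function.comp_apply,
    ContinuousLinearMap.coe_id', id_eq, ContinuousLinearMap.flip_apply,
    ContinuousLinearMap.neg_apply, smul_eq_mul, ContinuousLinearMap.coe_smul', Pi.smul_apply]
  rw [hsym u v, hsym a w]
  field_simp
  ring

end AuxCalculus

/-- Lorentz-violating Lagrangian: let `η` be a symmetric bilinear form of Lorentzian
signature (diagonalizable as `diag(−1, 1, …, 1)` in some basis, `n ≥ 2`), `m > 0` and
`a ∈ V`. On the open cone `A = {v : η(v,v) < 0}` of `η`-timelike vectors, set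
`F(v) = m·√(−η(v,v)) + η(v,a)` and `L = F²`. Then for `v ∈ A`, the fundamental
tensor of `L` at `v` is degenerate if and only if `F(v) = 0`. -/
theorem lorentz_violating_degenerate_iff
    {V : Type*} [NormedAddCommGroup V] [NormedSpace ℝ V] [FiniteDimensional ℝ V]
    {n : ℕ} (hn : 2 ≤ n) (hdim : Module.finrank ℝ V = n)
    (η : V →ₗ[ℝ] V →ₗ[ℝ] ℝ)
    (hsym : ∀ u w : V, η u w = η w u)
    (bas : Module.Basis (Fin n) ℝ V)
    (hbas : ∀ i j : Fin n,
      η (bas i) (bas j) = if i = j then (if (i : ℕ) = 0 then -1 else 1) else 0)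
    (m : ℝ) (hm : 0 < m) (a : V)
    (F L : V → ℝ)
    (hF : ∀ v : V, F v = m * Real.sqrt (-(η v v)) + η v a)
    (hL : ∀ v : V, L v = (F v) ^ 2)
    (v : V) (hv : η v v < 0) :
    (∃ u : V, u ≠ 0 ∧ ∀ w : V, fundTensor L v u w = 0) ↔ F v = 0 := by
  classical
  -- continuous version of η
  obtain ⟨ηc, hηc⟩ : ∃ ηc : V →L[ℝ] V →L[ℝ] ℝ, ∀ x y : V, ηc x y = η x y := by
    refine ⟨LinearMap.toContinuousLinearMap
      ((LinearMap.toContinuousLinearMap :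
          (V →ₗ[ℝ] ℝ) ≃ₗ[ℝ] (V →L[ℝ] ℝ)).toLinearMap ∘ₗ η), fun x y => ?_⟩
    simp [LinearMap.coe_toContinuousLinearMap']
  have hsymc : ∀ x y : V, ηc x y = ηc y x := fun x y => by rw [hηc, hηc, hsym]
  have hvc : ηc v v < 0 := by rw [hηc]; exact hv
  set R := Real.sqrt (-(η v v)) with hRdef
  have hpos : (0:ℝ) < -(η v v) := by linarith
  have hR : 0 < R := Real.sqrt_pos.mpr hpos
  have hRne : R ≠ 0 := ne_of_gt hR
  have hR2 : R ^ 2 = -(η v v) := Real.sq_sqrt (le_of_lt hpos)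
  have hQR : η v v = -R ^ 2 := by linarith
  have hFveq : F v = m * R + η v a := by rw [hF, ← hRdef]
  have hPv : -(m / R) * η v v + η v a = m * R + η v a := by
    rw [hQR]; field_simp
  -- nondegeneracy of η
  have hnd : ∀ x : V, (∀ w : V, η x w = 0) → x = 0 := by
    intro x hx
    have hco : ∀ i : Fin n, bas.repr x i = 0 := by
      intro i
      have h2 : η x (bas i) = bas.repr x i * (if (i:ℕ) = 0 then (-1:ℝ) else 1) := by
        conv_lhs => rw [← bas.sum_repr x]
        rw [map_sum, LinearMap.sum_apply, Finset.sum_eq_single i]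
        · rw [map_smul, LinearMap.smul_apply, hbas, if_pos rfl, smul_eq_mul]
        · intro j _ hj
          rw [map_smul, LinearMap.smul_apply, hbas, if_neg hj, smul_eq_mul, mul_zero]
        · intro h; exact absurd (Finset.mem_univ i) h
      have h3 := hx (bas i)
      rw [h2] at h3
      rcases mul_eq_zero.mp h3 with h | h
      · exact h
      · split_ifs at h <;> norm_num at h
    have hrep : bas.repr x = 0 := Finsupp.ext hco
    simpa using congrArg bas.repr.symm hrep
  -- L as an explicit function of ηc
  have hLfun : L = fun y : V => (m * Real.sqrt (-(ηc y y)) + ηc y a) ^ 2 := by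
    funext y
    rw [hL, hF, hηc, hηc]
  have claimA : ∀ x : V, η x x < 0 → HasFDerivAt L (lvDeriv ηc m a x) x := by
    intro x hx
    rw [hLfun]
    exact lv_hasFDerivAt ηc hsymc m a x (by rw [hηc]; exact hx)
  have hcont : Continuous fun x : V => ηc x x := ηc.continuous.clm_apply continuous_id
  have hopen : IsOpen {x : V | η x x < 0} := by
    have heq : {x : V | η x x < 0} = (fun x : V => ηc x x) ⁻¹' Set.Iio 0 := by
      ext x; simp [hηc]
    rw [heq]
    exact isOpen_Iio.preimage hcont
  have hev : fderiv ℝ L =ᶠ[nhds v] lvDeriv ηc m a :=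
    Filter.eventuallyEq_of_mem (hopen.mem_nhds hv) fun x hx => (claimA x hx).fderiv
  obtain ⟨D, hD, hDval⟩ := lvDeriv_hasFDerivAt ηc hsymc m (ne_of_gt hm) a v hvc
  have hsnd : fderiv ℝ (fderiv ℝ L) v = D := by
    rw [hev.fderiv_eq]
    exact hD.fderiv
  -- key formula
  have key : ∀ u w : V, fundTensor L v u w =
      (m * R + η v a) * (-(m / R) * η u w - m / R ^ 3 * (η v u * η v w))
        + (-(m / R) * η v u + η u a) * (-(m / R) * η v w + η w a) := by
    intro u w
    unfold fundTensor
    rw [hsnd, hDval u w]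
    simp only [hηc]
    rw [← hRdef]
    ring
  constructor
  · rintro ⟨u, hu0, hTu⟩
    by_contra hFne
    have hFv' : m * R + η v a ≠ 0 := by rw [← hFveq]; exact hFne
    -- step 1: P u = 0
    have h1 := hTu v
    rw [key u v] at h1
    have hbr : -(m / R) * η u v - m / R ^ 3 * (η v u * η v v) = 0 := by
      rw [hsym u v, hQR]
      field_simp
      ring
    rw [hbr, mul_zero, zero_add, hPv] at h1
    have hPu : -(m / R) * η v u + η u a = 0 := (mul_eq_zero.mp h1).resolve_right hFv'
    -- step 2: for all w, η u w + (η v u / R²) η v w = 0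
    have hbr2 : ∀ w : V, η u w + (η v u / R ^ 2) * η v w = 0 := by
      intro w
      have h2 := hTu w
      rw [key u w, hPu, zero_mul, add_zero] at h2
      have h3 : -(m / R) * η u w - m / R ^ 3 * (η v u * η v w) = 0 :=
        (mul_eq_zero.mp h2).resolve_left hFv'
      have hid : η u w + (η v u / R ^ 2) * η v w =
          (-(R / m)) * (-(m / R) * η u w - m / R ^ 3 * (η v u * η v w)) := by
        field_simp
        ring
      rw [hid, h3, mul_zero]
    -- hence u + (η v u / R²) • v is in the kernel of η
    have hker : ∀ w : V, η (u + (η v u / R ^ 2) • v) w = 0 := by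
      intro w
      rw [map_add, map_smul, LinearMap.add_apply, LinearMap.smul_apply, smul_eq_mul]
      exact hbr2 w
    have h0 := hnd _ hker
    have hu' : u = (-(η v u / R ^ 2)) • v := by
      rw [add_eq_zero_iff_eq_neg] at h0
      rw [← neg_smul] at h0
      exact h0
    -- plug into P u = 0
    have hPu' : -(m / R) * η v ((-(η v u / R ^ 2)) • v) + η ((-(η v u / R ^ 2)) • v) a = 0 := by
      rw [← hu']; exact hPu
    rw [map_smul, map_smul, LinearMap.smul_apply, smul_eq_mul, smul_eq_mul] at hPu'
    have hid2 : -(m / R) * (-(η v u / R ^ 2) * η v v) + -(η v u / R ^ 2) * η v a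
        = (-(η v u / R ^ 2)) * (m * R + η v a) := by
      rw [hQR]
      field_simp
      ring
    rw [hid2] at hPu'
    have hc0 : -(η v u / R ^ 2) = 0 := (mul_eq_zero.mp hPu').resolve_right hFv'
    exact hu0 (by rw [hu', hc0, zero_smul])
  · intro hF0
    have hFv0 : m * R + η v a = 0 := by rw [← hFveq]; exact hF0
    refine ⟨v, ?_, ?_⟩
    · intro h
      rw [h] at hv
      simp at hv
    · intro w
      rw [key v w, hPv, hFv0]
      ring
end
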